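/- Let φ be a C¹ convex function on an open convex set C and f a C¹ function on C. Then (f, φ) is L-smooth adaptable on C (i.e., both Lφ − f and Lφ + f are convex on C) if and only if for all x, y ∈ C, |f(x) − f(y) − ⟨∇f(y), x − y⟩| ≤ L·D_φ(x, y). -/

import Mathlib

open Set
open scoped RealInnerProductSpace

noncomputable def bregman {n : ℕ} (φ : EuclideanSpace ℝ (Fin n) → ℝ)
    (φ' : EuclideanSpace ℝ (Fin n) → EuclideanSpace ℝ (Fin n))
    (x y : EuclideanSpace ℝ (Fin n)) : ℝ :=
  φ x - φ y - ⟪φ' y, x - y⟫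

private lemma convexOn_iff_subgrad {n : ℕ} (C : Set (EuclideanSpace ℝ (Fin n)))
    (hCconv : Convex ℝ C) (g : EuclideanSpace ℝ (Fin n) → ℝ)
    (g' : EuclideanSpace ℝ (Fin n) → EuclideanSpace ℝ (Fin n))
    (hg : ∀ x ∈ C, HasGradientAt g (g' x) x) :
    ConvexOn ℝ C g ↔ ∀ x ∈ C, ∀ y ∈ C, g y + ⟪g' y, x - y⟫ ≤ g x := by
  constructor
  · intro hconv x hx y hy
    rcases eq_or_ne x y with rfl | hne
    · simp
    set A : ℝ →ᵃ[ℝ] EuclideanSpace ℝ (Fin n) := AffineMap.lineMap y x with hA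
    have hA0 : A 0 = y := AffineMap.lineMap_apply_zero y x
    have hA1 : A 1 = x := AffineMap.lineMap_apply_one y x
    have hψ : ConvexOn ℝ (A ⁻¹' C) (g ∘ A) := hconv.comp_affineMap A
    have h0 : (0 : ℝ) ∈ A ⁻¹' C := by simp [mem_preimage, hA0, hy]
    have h1 : (1 : ℝ) ∈ A ⁻¹' C := by simp [mem_preimage, hA1, hx]
    have hline : HasDerivAt (fun t : ℝ => A t) (x - y) 0 := by
      simp only [hA, AffineMap.lineMap_apply_module']
      simpa using ((hasDerivAt_id (0 : ℝ)).smul_const (x - y)).add_const y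
    have hgy := hasGradientAt_iff_hasFDerivAt.mp (hg y hy)
    have hd : HasDerivAt (g ∘ A) (⟪g' y, x - y⟫) 0 := by
      have hgy' : HasFDerivAt g
          ((InnerProductSpace.toDual ℝ (EuclideanSpace ℝ (Fin n))) (g' y))
          ((fun t : ℝ => A t) 0) := by simpa [hA0] using hgy
      have hc := hgy'.comp_hasDerivAt 0 hline
      have he : ((InnerProductSpace.toDual ℝ (EuclideanSpace ℝ (Fin n))) (g' y)) (x - y)
          = ⟪g' y, x - y⟫ := InnerProductSpace.toDual_apply_apply
      exact he ▸ hc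
    have key := hψ.le_slope_of_hasDerivAt h0 h1 zero_lt_one hd
    have hslope : slope (g ∘ A) 0 1 = g x - g y := by
      simp [slope_def_field, hA0, hA1]
    rw [hslope] at key
    linarith
  · intro h
    refine ⟨hCconv, ?_⟩
    intro x hx y hy a b ha hb hab
    set z := a • x + b • y with hz
    have hzC : z ∈ C := hCconv hx hy ha hb hab
    have h1 := h x hx z hzC
    have h2 := h y hy z hzC
    have hzero : a • (x - z) + b • (y - z) = (0 : EuclideanSpace ℝ (Fin n)) := by
      have hab' : a • z + b • z = z := by rw [← add_smul, hab, one_smul]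
      rw [smul_sub, smul_sub]
      rw [hz] at hab' ⊢
      abel_nf
      linear_combination (norm := module) -hab'
    have e : a * ⟪g' z, x - z⟫ + b * ⟪g' z, y - z⟫ = 0 := by
      rw [← real_inner_smul_right, ← real_inner_smul_right, ← inner_add_right, hzero,
        inner_zero_right]
    have A1 := mul_le_mul_of_nonneg_left h1 ha
    have A2 := mul_le_mul_of_nonneg_left h2 hb
    have hsum : a * g z + b * g z = g z := by rw [← add_mul, hab, one_mul]
    simp only [smul_eq_mul]
    nlinarith [A1, A2, e, hsum]

private lemma grad_sub {n : ℕ} (L : ℝ) {φ f : EuclideanSpace ℝ (Fin n) → ℝ}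
    {φ' f' x : EuclideanSpace ℝ (Fin n)}
    (hφ : HasGradientAt φ φ' x) (hf : HasGradientAt f f' x) :
    HasGradientAt (fun y => L * φ y - f y) (L • φ' - f') x := by
  rw [hasGradientAt_iff_hasFDerivAt] at hφ hf ⊢
  have h1 : HasFDerivAt (fun y => L * φ y)
      (L • (InnerProductSpace.toDual ℝ (EuclideanSpace ℝ (Fin n)) φ')) x := by
    exact hφ.const_smul L
  have h2 := h1.sub hf
  rwa [map_sub, map_smul]

private lemma grad_add {n : ℕ} (L : ℝ) {φ f : EuclideanSpace ℝ (Fin n) → ℝ}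
    {φ' f' x : EuclideanSpace ℝ (Fin n)}
    (hφ : HasGradientAt φ φ' x) (hf : HasGradientAt f f' x) :
    HasGradientAt (fun y => L * φ y + f y) (L • φ' + f') x := by
  rw [hasGradientAt_iff_hasFDerivAt] at hφ hf ⊢
  have h1 : HasFDerivAt (fun y => L * φ y)
      (L • (InnerProductSpace.toDual ℝ (EuclideanSpace ℝ (Fin n)) φ')) x := by
    exact hφ.const_smul L
  have h2 := h1.add hf
  rwa [map_add, map_smul]

/-- the extended descent lemma. `(f, φ)` is `L`-smooth adaptable on the
open convex set `C` (i.e. `Lφ - f` and `Lφ + f` are convex on `C`) iff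
`|f x - f y - ⟨∇f y, x - y⟩| ≤ L · D_φ(x, y)` for all `x, y ∈ C`. -/
theorem smooth_adaptable_iff_descent {n : ℕ}
    (C : Set (EuclideanSpace ℝ (Fin n))) (hC : IsOpen C) (hCconv : Convex ℝ C)
    (φ f : EuclideanSpace ℝ (Fin n) → ℝ)
    (φ' f' : EuclideanSpace ℝ (Fin n) → EuclideanSpace ℝ (Fin n))
    (hφ : ConvexOn ℝ C φ)
    (hφ' : ∀ x ∈ C, HasGradientAt φ (φ' x) x)
    (hf' : ∀ x ∈ C, HasGradientAt f (f' x) x)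
    (L : ℝ) (hL : 0 < L) :
    (ConvexOn ℝ C (fun x => L * φ x - f x) ∧ ConvexOn ℝ C (fun x => L * φ x + f x)) ↔
      (∀ x ∈ C, ∀ y ∈ C, |f x - f y - ⟪f' y, x - y⟫| ≤ L * bregman φ φ' x y) := by
  rw [convexOn_iff_subgrad C hCconv _ (fun z => L • φ' z - f' z)
    (fun x hx => grad_sub L (hφ' x hx) (hf' x hx)),
    convexOn_iff_subgrad C hCconv _ (fun z => L • φ' z + f' z)
    (fun x hx => grad_add L (hφ' x hx) (hf' x hx))]
  constructor
  · rintro ⟨h1, h2⟩ x hx y hy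
    have a1 := h1 x hx y hy
    have a2 := h2 x hx y hy
    simp only [inner_sub_left, inner_add_left, real_inner_smul_left] at a1 a2
    rw [abs_le]
    simp only [bregman]
    constructor <;> nlinarith
  · intro h
    constructor <;> intro x hx y hy <;>
      · have h' := abs_le.mp (h x hx y hy)
        simp only [bregman] at h'
        simp only [inner_sub_left, inner_add_left, real_inner_smul_left]
        nlinarith [h'.1, h'.2]
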